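/- arXiv:0901.1806 — 2 statements merged into one kernel-verified Lean document; each statement's English description precedes it below -/
import Mathlib

section
/- Let K be a field and let α ∈ K[[t]] be a root of a polynomial q ∈ K[X] which is separable (i.e. q and its derivative generate the unit ideal) and nonzero. Then α is a constant power series, i.e. α ∈ K. -/
/-- A root in `K[[t]]` of a nonzero separable polynomial over `K` is a constant
power series. -/
theorem powerSeries_root_of_separable_is_constant
    {K : Type*} [Field K] (q : Polynomial K) (hq0 : q ≠ 0) (hq : q.Separable)
    (α : PowerSeries K) (hroot : Polynomial.aeval α q = 0) :
    ∃ c : K, α = PowerSeries.C c := by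
  set c : K := PowerSeries.constantCoeff (R := K) α with hc
  refine ⟨c, ?_⟩
  -- q(c) = 0
  have hqc : q.eval c = 0 := by
    have := congrArg (PowerSeries.constantCoeff (R := K)) hroot
    rw [Polynomial.aeval_def, Polynomial.hom_eval₂] at this
    have hcomp : (PowerSeries.constantCoeff (R := K)).comp (algebraMap K (PowerSeries K))
        = RingHom.id K := by ext x; simp [PowerSeries.algebraMap_apply]
    rw [hcomp] at this
    simpa [Polynomial.eval₂_eq_eval_map] using this
  -- q'(c) ≠ 0
  have hq'c : q.derivative.eval c ≠ 0 := by
    intro h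
    obtain ⟨a, b, hab⟩ := hq
    have := congrArg (Polynomial.eval c) hab
    simp [hqc, h] at this
  -- Taylor expansion: q = C (q'(c)) * (X - C c) + (X - C c)^2 * r
  have h1 : (Polynomial.X - Polynomial.C c) ∣ q := Polynomial.dvd_iff_isRoot.2 hqc
  obtain ⟨s, hs⟩ := h1
  set d : K := q.derivative.eval c with hd
  have hsc : s.eval c = d := by
    have := congrArg Polynomial.derivative hs
    rw [Polynomial.derivative_mul] at this
    have := congrArg (Polynomial.eval c) this
    simpa [hqc] using this.symm
  have h2 : (Polynomial.X - Polynomial.C c) ∣ (s - Polynomial.C (s.eval c)) :=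
    Polynomial.dvd_iff_isRoot.2 (by simp)
  obtain ⟨r, hr⟩ := h2
  have hqexp : q = Polynomial.C d * (Polynomial.X - Polynomial.C c)
      + (Polynomial.X - Polynomial.C c)^2 * r := by
    have hss : s = Polynomial.C (s.eval c) + (Polynomial.X - Polynomial.C c) * r := by
      linear_combination hr
    rw [hs, hss, hsc]; ring
  -- evaluate at α
  set β : PowerSeries K := α - PowerSeries.C (R := K) c with hβ
  have hβ0 : PowerSeries.constantCoeff (R := K) β = 0 := by simp [hβ, hc]
  have key : β * (PowerSeries.C (R := K) d + β * Polynomial.aeval α r) = 0 := by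
    have := congrArg (Polynomial.aeval α) hqexp
    rw [hroot] at this
    simp only [map_add, map_mul, map_sub, map_pow, Polynomial.aeval_X, Polynomial.aeval_C] at this
    rw [show (algebraMap K (PowerSeries K)) c = PowerSeries.C (R := K) c from rfl,
        show (algebraMap K (PowerSeries K)) d = PowerSeries.C (R := K) _ from rfl]
      at this
    rw [← hβ] at this
    linear_combination -this
  have hunit : (PowerSeries.C (R := K) d + β * Polynomial.aeval α r) ≠ 0 := by
    intro h
    have := congrArg (PowerSeries.constantCoeff (R := K)) h
    simp [hβ0] at this
    exact hq'c (hd ▸ this)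
  have : β = 0 := by
    rcases mul_eq_zero.1 key with h | h
    · exact h
    · exact absurd h hunit
  have := sub_eq_zero.1 this
  exact this
end

section
/- Let k be a field of characteristic p > 0 and let a ∈ k be an element which is not a p-th power in k. Then the polynomial f = x^p + y·z^p − a is irreducible in the polynomial ring k[x, y, z]. -/
open MvPolynomial in
/-- A primitive linear polynomial `C A * X + C B` over a domain, where every common divisor
of `A` and `B` is a unit, is irreducible. -/
private lemma linear_irred_aux {R : Type*} [CommRing R] [IsDomain R]
    {A B : R} (hA : A ≠ 0) (h : ∀ r : R, r ∣ A → r ∣ B → IsUnit r) :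
    Irreducible (Polynomial.C A * Polynomial.X + Polynomial.C B) := by
  have hprim : (Polynomial.C A * Polynomial.X + Polynomial.C B).IsPrimitive := by
    intro r hr
    rw [Polynomial.C_dvd_iff_dvd_coeff] at hr
    have h1 := hr 1
    have h0 := hr 0
    simp only [Polynomial.coeff_add, Polynomial.coeff_C_mul, Polynomial.coeff_X_one,
      Polynomial.coeff_C, mul_one] at h1 h0
    norm_num at h1 h0
    exact h r h1 h0
  refine hprim.irreducible_of_irreducible_map_of_injective
    (IsFractionRing.injective R (FractionRing R)) ?_
  rw [Polynomial.map_add, Polynomial.map_mul, Polynomial.map_C, Polynomial.map_C,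
    Polynomial.map_X]
  refine Polynomial.irreducible_of_degree_eq_one (Polynomial.degree_linear ?_)
  simpa using hA

open MvPolynomial in
/-- Over a field `k` of characteristic `p > 0`, if `a ∈ k` is not a `p`-th power, then
`x^p + y·z^p − a` is irreducible in `k[x, y, z]`. -/
theorem xp_add_yzp_sub_a_irreducible
    {k : Type*} [Field k] (p : ℕ) (hp : 0 < p) [CharP k p]
    (a : k) (ha : ∀ c : k, c ^ p ≠ a) :
    Irreducible ((X 0 : MvPolynomial (Fin 3) k) ^ p + X 1 * X 2 ^ p - MvPolynomial.C a) := by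
  classical
  -- move the variable `y = X 1` to the front, then split it off
  set e : MvPolynomial (Fin 3) k ≃+* Polynomial (MvPolynomial (Fin 2) k) :=
    ((renameEquiv k (Equiv.swap (0 : Fin 3) 1)).trans (finSuccEquiv k 2)).toRingEquiv
    with he
  rw [← MulEquiv.irreducible_iff e]
  have coes : ∀ q : MvPolynomial (Fin 3) k,
      e q = (finSuccEquiv k 2) ((renameEquiv k (Equiv.swap (0 : Fin 3) 1)) q) := by
    intro q
    rw [he]
    rfl
  have e0 : e (X 0) = Polynomial.C (X 0) := by
    rw [coes, renameEquiv_apply, rename_X,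
      show (Equiv.swap (0 : Fin 3) 1) 0 = ((0 : Fin 2).succ : Fin 3) from by decide]
    exact finSuccEquiv_X_succ
  have e1 : e (X 1) = Polynomial.X := by
    rw [coes, renameEquiv_apply, rename_X,
      show (Equiv.swap (0 : Fin 3) 1) 1 = (0 : Fin 3) from by decide]
    exact finSuccEquiv_X_zero
  have e2 : e (X 2) = Polynomial.C (X 1) := by
    rw [coes, renameEquiv_apply, rename_X,
      show (Equiv.swap (0 : Fin 3) 1) 2 = ((1 : Fin 2).succ : Fin 3) from by decide]
    exact finSuccEquiv_X_succ
  have eC : e (MvPolynomial.C a) = Polynomial.C (MvPolynomial.C a) := by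
    rw [coes, renameEquiv_apply, rename_C]
    simp [finSuccEquiv_apply]
  have himg : e ((X 0 : MvPolynomial (Fin 3) k) ^ p + X 1 * X 2 ^ p - MvPolynomial.C a)
      = Polynomial.C ((X 1 : MvPolynomial (Fin 2) k) ^ p) * Polynomial.X
        + Polynomial.C ((X 0 : MvPolynomial (Fin 2) k) ^ p - MvPolynomial.C a) := by
    rw [map_sub, map_add, map_mul, map_pow, map_pow, e0, e1, e2, eC, map_sub, map_pow, map_pow]
    ring
  rw [himg]
  have hX1prime : Prime (X 1 : MvPolynomial (Fin 2) k) := by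
    set e2 : MvPolynomial (Fin 2) k ≃* Polynomial (MvPolynomial (Fin 1) k) :=
      ((renameEquiv k (Equiv.swap (0 : Fin 2) 1)).trans
        (finSuccEquiv k 1)).toRingEquiv.toMulEquiv with he2
    rw [← MulEquiv.prime_iff e2]
    have : e2 (X 1) = Polynomial.X := by
      have : e2 (X 1) = (finSuccEquiv k 1)
          ((renameEquiv k (Equiv.swap (0 : Fin 2) 1)) (X 1)) := by rw [he2]; rfl
      rw [this, renameEquiv_apply, rename_X,
        show (Equiv.swap (0 : Fin 2) 1) 1 = (0 : Fin 2) from by decide]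
      exact finSuccEquiv_X_zero
    rw [this]
    exact Polynomial.prime_X
  refine linear_irred_aux (pow_ne_zero p (X_ne_zero 1)) ?_
  intro r hr1 hr0
  obtain ⟨i, hip, hassoc⟩ := (dvd_prime_pow hX1prime p).mp hr1
  rcases Nat.eq_zero_or_pos i with hi0 | hipos
  · subst hi0
    rw [pow_zero] at hassoc
    exact associated_one_iff_isUnit.mp hassoc
  · exfalso
    have hX1B : (X 1 : MvPolynomial (Fin 2) k) ∣ ((X 0 : MvPolynomial (Fin 2) k) ^ p - MvPolynomial.C a) :=
      ((dvd_pow_self _ hipos.ne').trans hassoc.symm.dvd).trans hr0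
    obtain ⟨t, ht⟩ := hX1B
    have hmap := congrArg
      (aeval (fun j : Fin 2 => if j = 0 then (Polynomial.X : Polynomial k) else 0)) ht
    simp only [map_sub, map_pow, map_mul, aeval_X, aeval_C, if_pos rfl] at hmap
    norm_num at hmap
    exact Polynomial.X_pow_sub_C_ne_zero hp a (by simpa [Polynomial.algebraMap_eq] using hmap)
end
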